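/- Let K be a valued field of characteristic zero whose valuation ring K° is a Henselian local ring. Let f(Y) = a_0 + a_1·Y + … + a_m·Y^m be a polynomial over K, let n be a positive integer, and let x ∈ K be nonzero. Assume there exists an index i₀ with 1 ≤ i₀ ≤ m such that: (1) v(a_{i₀})·v(x)^{i₀} ≥ v(a_i)·v(x)^i for all 0 ≤ i ≤ m; (2) v(f(x)) < v(n)²·v(a_{i₀})·v(x)^{i₀}; (3) v(f'(x)) ≥ v(n)·v(a_{i₀})·v(x)^{i₀−1}. Let y₀ be the unique element of K with f(y₀) = 0 and v(y₀ − x) < v(n)·v(x), and write f(Y) = Σ_i b_i·(Y − y₀)^i (the Taylor expansion of f at y₀). Then for every w ∈ K with v(w − x) < v(n)·v(x), one has v(f(w)) = v(b₁)·v(w − y₀). -/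

import Mathlib

open Polynomial

section Aux

variable {K : Type*} [Field K] {Γ₀ : Type*} [LinearOrderedCommGroupWithZero Γ₀]
  (v : Valuation K Γ₀)

/-- Any natural number has valuation at most `1`. -/
lemma hensel_aux_nat_le_one (m : ℕ) : v (m : K) ≤ 1 := by
  induction m with
  | zero => simp
  | succ m ih =>
    push_cast
    exact v.map_add_le ih (le_of_eq v.map_one)

/-- If all coefficient terms are bounded, then the evaluation is bounded. -/
lemma hensel_aux_eval_le (p : K[X]) (z : K) (B : Γ₀)
    (h : ∀ i, v (p.coeff i) * v z ^ i ≤ B) : v (p.eval z) ≤ B := by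
  rw [Polynomial.eval_eq_sum_range]
  exact v.map_sum_le fun i _ => by rw [map_mul, map_pow]; exact h i

/-- Bound on Taylor coefficients at a point `z` with `v z ≤ v x`. -/
lemma hensel_aux_taylor_coeff_le (p : K[X]) (x z : K) (hx0 : v x ≠ 0) (hz : v z ≤ v x)
    (B : Γ₀) (hp : ∀ j, v (p.coeff j) * v x ^ j ≤ B) (i : ℕ) :
    v ((Polynomial.taylor z p).coeff i) * v x ^ i ≤ B := by
  have hxi : (0 : Γ₀) < v x ^ i := zero_lt_iff.mpr (pow_ne_zero _ hx0)
  rw [Polynomial.taylor_coeff]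
  rw [← le_mul_inv_iff₀ hxi]
  apply hensel_aux_eval_le
  intro m
  rw [Polynomial.hasseDeriv_coeff, map_mul]
  calc v ((((m + i).choose i : ℕ) : K)) * v (p.coeff (m + i)) * v z ^ m
      ≤ 1 * v (p.coeff (m + i)) * v x ^ m := by
        apply mul_le_mul' (mul_le_mul_left (hensel_aux_nat_le_one v _) _)
        exact pow_le_pow_left' hz m
    _ = v (p.coeff (m + i)) * v x ^ (m + i) * (v x ^ i)⁻¹ := by
        rw [one_mul, pow_add, mul_assoc, mul_assoc,
          mul_inv_cancel₀ (pow_ne_zero i hx0), mul_one]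
    _ ≤ B * (v x ^ i)⁻¹ := mul_le_mul_left (hp (m + i)) _

/-- Key estimate: a term `c * s ^ (j+1)` with `v c * v x ^ (j+1) ≤ B` and
`v s < v n * v x` has valuation `< v n * B`. -/
lemma hensel_aux_key (n : ℕ) (x : K) (hx0 : v x ≠ 0) (hvn0 : v (n : K) ≠ 0)
    (s c : K) (j : ℕ) (B : Γ₀) (hB : 0 < B)
    (hs : v s < v (n : K) * v x) (hc : v c * v x ^ (j + 1) ≤ B) :
    v (c * s ^ (j + 1)) < v (n : K) * B := by
  have hnB : (0 : Γ₀) < v (n : K) * B :=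
    zero_lt_iff.mpr (mul_ne_zero hvn0 hB.ne')
  rcases eq_or_ne c 0 with rfl | hc0
  · simpa using hnB
  have hvc : v c ≠ 0 := v.ne_zero_iff.mpr hc0
  have hsx : v s ≤ v x := by
    refine le_of_lt (lt_of_lt_of_le hs ?_)
    calc v (n : K) * v x ≤ 1 * v x :=
        mul_le_mul_left (hensel_aux_nat_le_one v n) _
      _ = v x := one_mul _
  rw [map_mul, map_pow]
  calc v c * v s ^ (j + 1)
      = v c * (v s ^ j * v s) := by rw [pow_succ]
    _ ≤ v c * (v x ^ j * v s) :=
        mul_le_mul_right (mul_le_mul_left (pow_le_pow_left' hsx j) _) _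
    _ < v c * (v x ^ j * (v (n : K) * v x)) := by
        refine mul_lt_mul_of_pos_left ?_ (zero_lt_iff.mpr hvc)
        exact mul_lt_mul_of_pos_left hs (zero_lt_iff.mpr (pow_ne_zero j hx0))
    _ = v (n : K) * (v c * v x ^ (j + 1)) := by rw [pow_succ, mul_left_comm (v x ^ j), mul_left_comm (v c)]
    _ ≤ v (n : K) * B := mul_le_mul_right hc _

end Aux

/-- Hensel-type lemma (Lemma 7.13 / `hm` in the paper, second part): with `y₀` the unique
root of `f` with `rv_n(y₀) = rv_n(x)`, and `f(Y) = Σ bᵢ (Y - y₀)ⁱ` the Taylor expansion of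
`f` at `y₀`, for every `w` with `rv_n(w) = rv_n(x)` one has `ord f(w) = ord (b₁ (w - y₀))`,
i.e. multiplicatively `v (f w) = v b₁ * v (w - y₀)`. -/
theorem hensel_lemma_value_at_rv_class
    {K : Type*} [Field K] [CharZero K]
    {Γ₀ : Type*} [LinearOrderedCommGroupWithZero Γ₀]
    (v : Valuation K Γ₀) (hhens : HenselianLocalRing v.integer)
    (f : K[X]) (n : ℕ) (hn : 0 < n) (x : K) (hx : x ≠ 0)
    (i₀ : ℕ) (hi₀1 : 1 ≤ i₀) (hi₀m : i₀ ≤ f.natDegree)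
    (hmin : ∀ i ≤ f.natDegree, v (f.coeff i) * v x ^ i ≤ v (f.coeff i₀) * v x ^ i₀)
    (hfx : v (f.eval x) < v (n : K) ^ 2 * (v (f.coeff i₀) * v x ^ i₀))
    (hfx' : v (n : K) * (v (f.coeff i₀) * v x ^ (i₀ - 1)) ≤ v (f.derivative.eval x))
    (y₀ : K) (hroot : f.eval y₀ = 0) (hrv : v (y₀ - x) < v (n : K) * v x) :
    ∀ w : K, v (w - x) < v (n : K) * v x →
      v (f.eval w) = v ((Polynomial.taylor y₀ f).coeff 1) * v (w - y₀) := by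
  have hx0 : v x ≠ 0 := v.ne_zero_iff.mpr hx
  -- the pivot values
  set A' : Γ₀ := v (f.coeff i₀) * v x ^ (i₀ - 1) with hA'def
  have hpow : v x ^ i₀ = v x ^ (i₀ - 1) * v x := by
    conv_lhs => rw [← Nat.sub_add_cancel hi₀1]
    rw [pow_succ]
  have hAeq : v (f.coeff i₀) * v x ^ i₀ = A' * v x := by
    rw [hpow, hA'def, mul_assoc]
  -- positivity facts
  have hRHSpos : (0 : Γ₀) < v (n : K) ^ 2 * (v (f.coeff i₀) * v x ^ i₀) :=
    lt_of_le_of_lt zero_le' hfx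
  have hvn0 : v (n : K) ≠ 0 := by
    intro h
    rw [h] at hRHSpos
    simp at hRHSpos
  have hci₀ : v (f.coeff i₀) ≠ 0 := by
    intro h
    rw [h] at hRHSpos
    simp at hRHSpos
  have hA'0 : (0 : Γ₀) < A' := zero_lt_iff.mpr (mul_ne_zero hci₀ (pow_ne_zero _ hx0))
  have hvn1 : v (n : K) ≤ 1 := hensel_aux_nat_le_one v n
  have hnA'0 : (0 : Γ₀) < v (n : K) * A' := zero_lt_iff.mpr (mul_ne_zero hvn0 hA'0.ne')
  -- coefficient bound for f
  have HF : ∀ j, v (f.coeff j) * v x ^ j ≤ A' * v x := by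
    intro j
    by_cases hj : j ≤ f.natDegree
    · rw [← hAeq]; exact hmin j hj
    · rw [Polynomial.coeff_eq_zero_of_natDegree_lt (lt_of_not_ge hj)]
      simp [zero_le']
  -- coefficient bound for the derivative of f
  have HFd : ∀ j, v (f.derivative.coeff j) * v x ^ j ≤ A' := by
    intro j
    rw [Polynomial.coeff_derivative, map_mul]
    have h1 : v (f.coeff (j + 1)) * v (((j : K) + 1)) * v x ^ j
        ≤ v (f.coeff (j + 1)) * v x ^ j := by
      have : v (((j : K) + 1)) ≤ 1 := by
        have := hensel_aux_nat_le_one v (K := K) (j + 1)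
        push_cast at this
        exact this
      calc v (f.coeff (j + 1)) * v (((j : K) + 1)) * v x ^ j
          ≤ v (f.coeff (j + 1)) * 1 * v x ^ j := by
            exact mul_le_mul_left (mul_le_mul_right this _) _
        _ = v (f.coeff (j + 1)) * v x ^ j := by rw [mul_one]
    refine le_trans h1 ?_
    have h2 : v (f.coeff (j + 1)) * v x ^ j * v x ≤ A' * v x := by
      rw [mul_assoc, ← pow_succ]
      exact HF (j + 1)
    exact le_of_mul_le_mul_right h2 (zero_lt_iff.mpr hx0)
  -- v y₀ ≤ v x
  have hy₀x : v y₀ ≤ v x := by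
    have h1 : v (y₀ - x) < v x :=
      lt_of_lt_of_le hrv (by calc v (n : K) * v x ≤ 1 * v x := mul_le_mul_left hvn1 _
                               _ = v x := one_mul _)
    have : y₀ = (y₀ - x) + x := by ring
    rw [this]
    exact le_of_eq (v.map_add_eq_of_lt_right h1)
  -- Taylor coefficient bounds
  have HG : ∀ i, v ((Polynomial.taylor y₀ f).coeff i) * v x ^ i ≤ A' * v x :=
    hensel_aux_taylor_coeff_le v f x y₀ hx0 hy₀x _ HF
  have HQ : ∀ i, v ((Polynomial.taylor x f.derivative).coeff i) * v x ^ i ≤ A' :=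
    hensel_aux_taylor_coeff_le v f.derivative x x hx0 le_rfl _ HFd
  -- Step B : v (f'(y₀)) = v (f'(x)) ≥ v n * A'
  have hb₁ : v (n : K) * A' ≤ v ((Polynomial.taylor y₀ f).coeff 1) := by
    rw [Polynomial.taylor_coeff_one]
    have heval : f.derivative.eval y₀ =
        (Polynomial.taylor x f.derivative).eval (y₀ - x) :=
      (Polynomial.taylor_eval_sub x f.derivative y₀).symm
    set q := Polynomial.taylor x f.derivative with hq
    have hsum : q.eval (y₀ - x) =
        (∑ i ∈ Finset.range q.natDegree, q.coeff (i + 1) * (y₀ - x) ^ (i + 1))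
          + f.derivative.eval x := by
      rw [Polynomial.eval_eq_sum_range, Finset.sum_range_succ']
      congr 1
      rw [hq, Polynomial.taylor_coeff_zero, pow_zero, mul_one]
    have htail : v (∑ i ∈ Finset.range q.natDegree, q.coeff (i + 1) * (y₀ - x) ^ (i + 1))
        < v (n : K) * A' := by
      apply v.map_sum_lt hnA'0.ne'
      intro i _
      exact hensel_aux_key v n x hx0 hvn0 (y₀ - x) _ i A' hA'0 hrv (HQ (i + 1))
    rw [heval, hsum, v.map_add_eq_of_lt_right (lt_of_lt_of_le htail hfx')]
    exact hfx'
  have hb₁0 : v ((Polynomial.taylor y₀ f).coeff 1) ≠ 0 :=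
    fun h => absurd (h ▸ hb₁) (not_le_of_gt hnA'0)
  -- Main part
  intro w hw
  rcases eq_or_ne w y₀ with rfl | hwy
  · rw [hroot, sub_self]
    simp
  have hs0 : v (w - y₀) ≠ 0 := v.ne_zero_iff.mpr (sub_ne_zero.mpr hwy)
  have hs : v (w - y₀) < v (n : K) * v x := by
    have : w - y₀ = (w - x) - (y₀ - x) := by ring
    rw [this]
    exact lt_of_le_of_lt (v.map_sub _ _) (max_lt hw hrv)
  set g := Polynomial.taylor y₀ f with hg
  have hDg : 1 ≤ g.natDegree := by
    rw [hg, Polynomial.natDegree_taylor]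
    exact le_trans hi₀1 hi₀m
  have heval : f.eval w = g.eval (w - y₀) := (Polynomial.taylor_eval_sub y₀ f w).symm
  have hmem : 1 ∈ Finset.range (g.natDegree + 1) := Finset.mem_range.mpr (by omega)
  have hsplit : g.eval (w - y₀) = g.coeff 1 * (w - y₀) ^ 1 +
      ∑ i ∈ (Finset.range (g.natDegree + 1)).erase 1, g.coeff i * (w - y₀) ^ i := by
    rw [Polynomial.eval_eq_sum_range, ← Finset.add_sum_erase _ _ hmem]
  have hmain : v (g.coeff 1 * (w - y₀) ^ 1) = v (g.coeff 1) * v (w - y₀) := by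
    rw [map_mul, map_pow, pow_one]
  have hmainpos : (0 : Γ₀) < v (g.coeff 1) * v (w - y₀) :=
    zero_lt_iff.mpr (mul_ne_zero hb₁0 hs0)
  have htail : v (∑ i ∈ (Finset.range (g.natDegree + 1)).erase 1,
      g.coeff i * (w - y₀) ^ i) < v (g.coeff 1) * v (w - y₀) := by
    apply v.map_sum_lt hmainpos.ne'
    intro i hi
    have hi1 : i ≠ 1 := (Finset.mem_erase.mp hi).1
    rcases Nat.lt_or_ge i 2 with h2 | h2
    · -- i = 0
      interval_cases i
      · have h0 : g.coeff 0 = 0 := by rw [hg, Polynomial.taylor_coeff_zero, hroot]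
        rw [h0, zero_mul, map_zero]
        exact hmainpos
      · exact absurd rfl hi1
    · -- i ≥ 2 : write i = j + 2
      obtain ⟨j, rfl⟩ : ∃ j, i = j + 2 := ⟨i - 2, by omega⟩
      have hcoeff : v (g.coeff (j + 2)) * v x ^ (j + 1) ≤ A' := by
        have h2 : v (g.coeff (j + 2)) * v x ^ (j + 1) * v x ≤ A' * v x := by
          rw [mul_assoc, ← pow_succ]
          exact HG (j + 2)
        exact le_of_mul_le_mul_right h2 (zero_lt_iff.mpr hx0)
      have hkey : v (g.coeff (j + 2) * (w - y₀) ^ (j + 1)) < v (n : K) * A' :=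
        hensel_aux_key v n x hx0 hvn0 (w - y₀) _ j A' hA'0 hs hcoeff
      calc v (g.coeff (j + 2) * (w - y₀) ^ (j + 2))
          = v (g.coeff (j + 2) * (w - y₀) ^ (j + 1)) * v (w - y₀) := by
            rw [map_mul, map_mul, map_pow, map_pow, pow_succ, mul_assoc]
        _ < (v (n : K) * A') * v (w - y₀) := by
            rw [mul_comm _ (v (w - y₀)), mul_comm (v (n : K) * A') (v (w - y₀))]
            exact mul_lt_mul_of_pos_left hkey (zero_lt_iff.mpr hs0)
        _ ≤ v (g.coeff 1) * v (w - y₀) := mul_le_mul_left hb₁ _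
  rw [heval, hsplit, v.map_add_eq_of_lt_left (by rwa [hmain]), hmain]
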